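/- Completeness of the second verification equation (Equation (2)) of the structure-preserving constant-size signature scheme CSIG: for every k ∈ ℕ, elements h_u ∈ 𝔾₁ and g₂ ∈ 𝔾₂, scalars β, δ_z, ζ, φ, ω ∈ R and δ : Fin k → R, and every message vector m : Fin k → 𝔾₂, define h_z = δ_z • h_u, hᵢ = δᵢ • h_u (i = 1..k), z = ζ • g₂, u = (β − φ·ω − δ_z·ζ) • g₂ − Σᵢ δᵢ • mᵢ, v = φ • h_u, and w = ω • g₂. Then e(h_z, z) + e(h_u, u) + e(v, w) + Σᵢ e(hᵢ, mᵢ) = e(h_u, β • g₂), i.e. an honestly generated CSIG signature satisfies verification equation (2) with B = e(h_u, β • g₂). -/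
import Mathlib


/-- Completeness of verification equation (2) of the structure-preserving
constant-size signature scheme CSIG, over a commutative ring `R` with
`R`-modules `𝔾₁, 𝔾₂, 𝔾₃` and an `R`-bilinear map `e : 𝔾₁ → 𝔾₂ → 𝔾₃`:
an honestly generated signature satisfies
`e(h_z, z) + e(h_u, u) + e(v, w) + Σᵢ e(hᵢ, mᵢ) = e(h_u, β • g₂)`. -/
theorem csig_verify_eq2_complete {R : Type*} [CommRing R]
    {G₁ G₂ G₃ : Type*} [AddCommGroup G₁] [AddCommGroup G₂] [AddCommGroup G₃]
    [Module R G₁] [Module R G₂] [Module R G₃]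
    (e : G₁ →ₗ[R] G₂ →ₗ[R] G₃)
    (k : ℕ) (h_u : G₁) (g₂ : G₂)
    (β δ_z ζ φ ω : R) (δ : Fin k → R)
    (m : Fin k → G₂)
    (h_z v : G₁) (hi : Fin k → G₁) (z u w : G₂)
    (hh_z : h_z = δ_z • h_u)
    (hhi : ∀ i, hi i = δ i • h_u)
    (hz : z = ζ • g₂)
    (hu : u = (β - φ * ω - δ_z * ζ) • g₂ - ∑ i, δ i • m i)
    (hv : v = φ • h_u)
    (hw : w = ω • g₂) :
    e h_z z + e h_u u + e v w + ∑ i, e (hi i) (m i) = e h_u (β • g₂) := by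
  subst hh_z hz hu hv hw
  simp only [hhi, map_smul, LinearMap.smul_apply, map_sub, map_sum, LinearMap.sub_apply,
    LinearMap.sum_apply, smul_smul, sub_smul]
  rw [mul_comm ω φ, mul_comm ζ δ_z]
  abel
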